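/- Fix m, n, d ≥ 1, scales ν, ε > 0, an activation σ : ℝ → ℝ that is twice continuously differentiable with σ(0) = 0, σ'(0) = 1, |σ'| ≤ 1 and |σ''| ≤ 1 on ℝ, and data (x_i, y_i)_{i=1}^n with ‖x_i‖₂ ≤ 1 and |y_i| ≤ 1. For parameters θ = (a_k, w_k)_{k=1}^m define for each k ∈ [m]: f_k = (1/n) Σ_{i=1}^n ( e_i(θ)·σ(ε⟨w_k, x_i⟩)/ε + y_i·⟨w_k, x_i⟩ ), g_k = (1/n) Σ_{i=1}^n ( e_i(θ)·a_k·σ'(ε⟨w_k, x_i⟩) + y_i·a_k )·x_i, p_k = max(|a_k|, ‖w_k‖_∞), and p_max = max_{k ∈ [m]} p_k. Then for every k ∈ [m]: |f_k| ≤ d·m·ν·ε·p_max²·‖w_k‖_∞ + ε·d·‖w_k‖_∞², and ‖g_k‖_∞ ≤ √d·m·ν·ε·p_max²·|a_k| + ε·√d·‖w_k‖_∞·|a_k|. -/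

import Mathlib

/-- Estimates on the difference between the real and the linear dynamics (∞-energy,
a-lag regime): with `p_k = max(|a_k|, ‖w_k‖_∞)` and `p_max = max_k p_k`, one has
`|f_k| ≤ d m ν ε p_max² ‖w_k‖_∞ + ε d ‖w_k‖_∞²` and
`‖g_k‖_∞ ≤ √d m ν ε p_max² |a_k| + ε √d ‖w_k‖_∞ |a_k|`. -/
theorem stmt_18 (m n d : ℕ) (hm : 1 ≤ m) (hn : 1 ≤ n) (hd : 1 ≤ d)
    (ν ε : ℝ) (hν : 0 < ν) (hε : 0 < ε)
    (σ : ℝ → ℝ) (hσ : ContDiff ℝ 2 σ) (hσ0 : σ 0 = 0) (hσ1 : deriv σ 0 = 1)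
    (hσ' : ∀ u : ℝ, |deriv σ u| ≤ 1) (hσ'' : ∀ u : ℝ, |deriv (deriv σ) u| ≤ 1)
    (x : Fin n → Fin d → ℝ) (y : Fin n → ℝ)
    (hx : ∀ i, Real.sqrt (∑ t, (x i t) ^ 2) ≤ 1) (hy : ∀ i, |y i| ≤ 1)
    (a : Fin m → ℝ) (w : Fin m → Fin d → ℝ)
    (e : Fin n → ℝ)
    (he : ∀ i, e i = (∑ k, ν * a k * σ (ε * ∑ t, w k t * x i t)) - y i)
    (f : Fin m → ℝ)
    (hf : ∀ k, f k = (1 / (n : ℝ)) *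
      ∑ i, (e i * σ (ε * ∑ t, w k t * x i t) / ε + y i * ∑ t, w k t * x i t))
    (g : Fin m → Fin d → ℝ)
    (hg : ∀ k j, g k j = (1 / (n : ℝ)) *
      ∑ i, (e i * a k * deriv σ (ε * ∑ t, w k t * x i t) + y i * a k) * x i j)
    (winf : Fin m → ℝ) (hwinf : ∀ k, winf k = ⨆ j, |w k j|)
    (p : Fin m → ℝ) (hp : ∀ k, p k = max |a k| (winf k))
    (pmax : ℝ) (hpmax : pmax = ⨆ k, p k) :
    ∀ k,
      |f k| ≤ d * m * ν * ε * pmax ^ 2 * winf k + ε * d * (winf k) ^ 2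
      ∧ (⨆ j, |g k j|) ≤ Real.sqrt d * m * ν * ε * pmax ^ 2 * |a k|
          + ε * Real.sqrt d * winf k * |a k| := by
  haveI : Nonempty (Fin d) := ⟨⟨0, hd⟩⟩
  have hn0 : (n : ℝ) ≠ 0 := Nat.cast_ne_zero.mpr (by omega)
  have hnpos : (0:ℝ) < n := by positivity
  have hs0 : (0 : ℝ) ≤ Real.sqrt d := Real.sqrt_nonneg d
  have hs2 : Real.sqrt d * Real.sqrt d = (d : ℝ) := Real.mul_self_sqrt (Nat.cast_nonneg d)
  -- σ facts
  have hdiff : Differentiable ℝ σ := hσ.differentiable (by norm_num)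
  have hσabs : ∀ u : ℝ, |σ u| ≤ |u| := by
    intro u
    have := Convex.norm_image_sub_le_of_norm_deriv_le (f := σ) (s := Set.univ)
      (fun v _ => hdiff v) (fun v _ => by simpa [Real.norm_eq_abs] using hσ' v)
      convex_univ (Set.mem_univ 0) (Set.mem_univ u)
    simpa [Real.norm_eq_abs, hσ0] using this
  have hnear : ∀ u : ℝ, |deriv σ u - 1| ≤ |u| := by
    have hcd : ContDiff ℝ 1 (deriv σ) := by
      have h2 : ContDiff ℝ ((1 : ℕ∞) + 1) σ := by norm_num; exact hσ
      exact (contDiff_succ_iff_deriv.mp h2).2.2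
    have hdiff' : Differentiable ℝ (deriv σ) := hcd.differentiable one_ne_zero
    intro u
    have := Convex.norm_image_sub_le_of_norm_deriv_le (f := deriv σ) (s := Set.univ)
      (fun v _ => hdiff' v) (fun v _ => by simpa [Real.norm_eq_abs] using hσ'' v)
      convex_univ (Set.mem_univ 0) (Set.mem_univ u)
    simpa [Real.norm_eq_abs, hσ1] using this
  have hquad : ∀ u : ℝ, |σ u - u| ≤ u ^ 2 := by
    intro u
    have key := Convex.norm_image_sub_le_of_norm_deriv_le (f := fun t => σ t - t)
      (s := Set.Icc (-|u|) |u|) (C := |u|)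
      (fun v _ => ((hdiff v).sub differentiableAt_fun_id))
      (fun v hv => by
        have hder : deriv (fun t : ℝ => σ t - t) v = deriv σ v - 1 := by
          have : deriv (fun t : ℝ => σ t - t) v = deriv σ v - deriv (fun t : ℝ => t) v :=
            deriv_sub (hdiff v) differentiableAt_fun_id
          simpa using this
        rw [hder, Real.norm_eq_abs]
        exact (hnear v).trans (abs_le.mpr ⟨hv.1, hv.2⟩))
      (convex_Icc _ _)
      ⟨neg_nonpos.mpr (abs_nonneg u), abs_nonneg u⟩
      ⟨neg_abs_le u, le_abs_self u⟩
    simp only [Real.norm_eq_abs] at key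
    calc |σ u - u| = |(σ u - u) - (σ 0 - 0)| := by rw [hσ0]; ring_nf
      _ ≤ |u| * |u - 0| := key
      _ = u ^ 2 := by rw [sub_zero, ← abs_mul, ← sq, abs_sq]
  -- x facts
  have hsq : ∀ i, (∑ t, (x i t)^2) ≤ 1 := by
    intro i
    have hs0' : (0:ℝ) ≤ ∑ t, (x i t)^2 := Finset.sum_nonneg (fun t _ => sq_nonneg _)
    nlinarith [Real.sq_sqrt hs0', Real.sqrt_nonneg (∑ t, (x i t)^2), hx i]
  have hxabs : ∀ i j, |x i j| ≤ 1 := by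
    intro i j
    have : (x i j)^2 ≤ 1 :=
      le_trans (Finset.single_le_sum (fun t _ => sq_nonneg (x i t)) (Finset.mem_univ j)) (hsq i)
    nlinarith [abs_nonneg (x i j), sq_abs (x i j)]
  have hxsum : ∀ i, (∑ t, |x i t|) ≤ Real.sqrt d := by
    intro i
    have hcs := Finset.sum_mul_sq_le_sq_mul_sq Finset.univ (fun t => |x i t|) (fun _ => 1)
    simp only [mul_one, one_pow, Finset.sum_const, Finset.card_univ, Fintype.card_fin,
      sq_abs, nsmul_eq_mul] at hcs
    have h1 : (∑ t, |x i t|) ^ 2 ≤ (d:ℝ) := by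
      calc (∑ t, |x i t|)^2 ≤ (∑ t, (x i t)^2) * d := hcs
        _ ≤ 1 * d := mul_le_mul_of_nonneg_right (hsq i) (Nat.cast_nonneg d)
        _ = d := one_mul _
    calc (∑ t, |x i t|) = Real.sqrt ((∑ t, |x i t|)^2) :=
          (Real.sqrt_sq (Finset.sum_nonneg (fun t _ => abs_nonneg _))).symm
      _ ≤ Real.sqrt d := Real.sqrt_le_sqrt h1
  -- winf / pmax facts
  have hwle : ∀ k j, |w k j| ≤ winf k := fun k j => by
    rw [hwinf]; exact le_ciSup (Finite.bddAbove_range fun j => |w k j|) j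
  have hw0 : ∀ k, 0 ≤ winf k := fun k => (abs_nonneg _).trans (hwle k ⟨0, hd⟩)
  have hppmax : ∀ k, p k ≤ pmax := fun k => by
    rw [hpmax]; exact le_ciSup (Finite.bddAbove_range p) k
  have hap : ∀ k, |a k| ≤ pmax :=
    fun k => le_trans (by rw [hp]; exact le_max_left _ _) (hppmax k)
  have hwp : ∀ k, winf k ≤ pmax :=
    fun k => le_trans (by rw [hp]; exact le_max_right _ _) (hppmax k)
  have hp0 : (0:ℝ) ≤ pmax := (hw0 ⟨0, hm⟩).trans (hwp _)
  -- inner product bound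
  have hS : ∀ k i, |∑ t, w k t * x i t| ≤ Real.sqrt d * winf k := by
    intro k i
    calc |∑ t, w k t * x i t| ≤ ∑ t, |w k t * x i t| := Finset.abs_sum_le_sum_abs _ _
      _ = ∑ t, |w k t| * |x i t| := by simp [abs_mul]
      _ ≤ ∑ t, winf k * |x i t| :=
          Finset.sum_le_sum (fun t _ => mul_le_mul_of_nonneg_right (hwle k t) (abs_nonneg _))
      _ = winf k * ∑ t, |x i t| := by rw [Finset.mul_sum]
      _ ≤ winf k * Real.sqrt d := mul_le_mul_of_nonneg_left (hxsum i) (hw0 k)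
      _ = Real.sqrt d * winf k := mul_comm _ _
  -- network-output bound
  have hE : ∀ i, |∑ l, ν * a l * σ (ε * ∑ t, w l t * x i t)| ≤
      m * (ν * (ε * (Real.sqrt d * pmax)) * pmax) := by
    intro i
    calc |∑ l, ν * a l * σ (ε * ∑ t, w l t * x i t)|
        ≤ ∑ l, |ν * a l * σ (ε * ∑ t, w l t * x i t)| := Finset.abs_sum_le_sum_abs _ _
      _ ≤ ∑ _l : Fin m, ν * (ε * (Real.sqrt d * pmax)) * pmax := by
          apply Finset.sum_le_sum
          intro l _
          have hσb : |σ (ε * ∑ t, w l t * x i t)| ≤ ε * (Real.sqrt d * pmax) := by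
            calc |σ (ε * ∑ t, w l t * x i t)| ≤ |ε * ∑ t, w l t * x i t| := hσabs _
              _ = ε * |∑ t, w l t * x i t| := by rw [abs_mul, abs_of_pos hε]
              _ ≤ ε * (Real.sqrt d * pmax) := by
                  apply mul_le_mul_of_nonneg_left _ hε.le
                  exact (hS l i).trans (mul_le_mul_of_nonneg_left (hwp l) hs0)
          calc |ν * a l * σ (ε * ∑ t, w l t * x i t)|
              = ν * (|a l| * |σ (ε * ∑ t, w l t * x i t)|) := by
                rw [abs_mul, abs_mul, abs_of_pos hν]; ring
            _ ≤ ν * (pmax * (ε * (Real.sqrt d * pmax))) := by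
                apply mul_le_mul_of_nonneg_left _ hν.le
                exact mul_le_mul (hap l) hσb (abs_nonneg _) hp0
            _ = ν * (ε * (Real.sqrt d * pmax)) * pmax := by ring
      _ = m * (ν * (ε * (Real.sqrt d * pmax)) * pmax) := by
          rw [Finset.sum_const, Finset.card_univ, Fintype.card_fin, nsmul_eq_mul]
  intro k
  constructor
  · -- f bound
    have hterm : ∀ i, |e i * σ (ε * ∑ t, w k t * x i t) / ε + y i * ∑ t, w k t * x i t|
        ≤ d * m * ν * ε * pmax ^ 2 * winf k + ε * d * (winf k) ^ 2 := by
      intro i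
      have hσk : |σ (ε * ∑ t, w k t * x i t)| ≤ ε * (Real.sqrt d * winf k) := by
        calc |σ (ε * ∑ t, w k t * x i t)| ≤ |ε * ∑ t, w k t * x i t| := hσabs _
          _ = ε * |∑ t, w k t * x i t| := by rw [abs_mul, abs_of_pos hε]
          _ ≤ ε * (Real.sqrt d * winf k) := mul_le_mul_of_nonneg_left (hS k i) hε.le
      have hq2 : |σ (ε * ∑ t, w k t * x i t) - ε * ∑ t, w k t * x i t|
          ≤ ε ^ 2 * ((d:ℝ) * (winf k) ^ 2) := by
        have hq := hquad (ε * ∑ t, w k t * x i t)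
        have hS2 : (∑ t, w k t * x i t) ^ 2 ≤ (d:ℝ) * (winf k) ^ 2 := by
          nlinarith [hS k i, abs_nonneg (∑ t, w k t * x i t),
            sq_abs (∑ t, w k t * x i t), hs2, hw0 k, hs0]
        calc |σ (ε * ∑ t, w k t * x i t) - ε * ∑ t, w k t * x i t|
            ≤ (ε * ∑ t, w k t * x i t) ^ 2 := hq
          _ = ε ^ 2 * (∑ t, w k t * x i t) ^ 2 := by ring
          _ ≤ ε ^ 2 * ((d:ℝ) * (winf k) ^ 2) :=
              mul_le_mul_of_nonneg_left hS2 (sq_nonneg ε)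
      have hrw : e i * σ (ε * ∑ t, w k t * x i t) / ε + y i * ∑ t, w k t * x i t
          = ((∑ l, ν * a l * σ (ε * ∑ t, w l t * x i t)) * σ (ε * ∑ t, w k t * x i t)) / ε
            - y i * ((σ (ε * ∑ t, w k t * x i t) - ε * ∑ t, w k t * x i t) / ε) := by
        rw [he i]; field_simp; ring
      rw [hrw]
      calc |((∑ l, ν * a l * σ (ε * ∑ t, w l t * x i t)) * σ (ε * ∑ t, w k t * x i t)) / ε
            - y i * ((σ (ε * ∑ t, w k t * x i t) - ε * ∑ t, w k t * x i t) / ε)|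
          ≤ |((∑ l, ν * a l * σ (ε * ∑ t, w l t * x i t)) * σ (ε * ∑ t, w k t * x i t)) / ε|
            + |y i * ((σ (ε * ∑ t, w k t * x i t) - ε * ∑ t, w k t * x i t) / ε)| :=
            abs_sub _ _
        _ = |∑ l, ν * a l * σ (ε * ∑ t, w l t * x i t)| * |σ (ε * ∑ t, w k t * x i t)| / ε
            + |y i| * (|σ (ε * ∑ t, w k t * x i t) - ε * ∑ t, w k t * x i t| / ε) := by
            rw [abs_div, abs_mul, abs_mul, abs_div, abs_of_pos hε]
        _ ≤ (m * (ν * (ε * (Real.sqrt d * pmax)) * pmax)) * (ε * (Real.sqrt d * winf k)) / ε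
            + 1 * ((ε ^ 2 * ((d:ℝ) * (winf k) ^ 2)) / ε) := by
            gcongr <;> first
              | exact hE i | exact hσk | exact hy i | exact hq2 | positivity
        _ = d * m * ν * ε * pmax ^ 2 * winf k + ε * d * (winf k) ^ 2 := by
            field_simp
            linear_combination (↑m * ν * pmax ^ 2 * winf k) * hs2
    rw [hf k]
    calc |(1 / (n : ℝ)) * ∑ i, (e i * σ (ε * ∑ t, w k t * x i t) / ε
            + y i * ∑ t, w k t * x i t)|
        = (1 / (n : ℝ)) * |∑ i, (e i * σ (ε * ∑ t, w k t * x i t) / ε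
            + y i * ∑ t, w k t * x i t)| := by
          rw [abs_mul, abs_of_nonneg (by positivity)]
      _ ≤ (1 / (n : ℝ)) * ∑ i, |e i * σ (ε * ∑ t, w k t * x i t) / ε
            + y i * ∑ t, w k t * x i t| := by
          apply mul_le_mul_of_nonneg_left (Finset.abs_sum_le_sum_abs _ _) (by positivity)
      _ ≤ (1 / (n : ℝ)) * ∑ _i : Fin n,
            (d * m * ν * ε * pmax ^ 2 * winf k + ε * d * (winf k) ^ 2) := by
          apply mul_le_mul_of_nonneg_left
            (Finset.sum_le_sum (fun i _ => hterm i)) (by positivity)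
      _ = d * m * ν * ε * pmax ^ 2 * winf k + ε * d * (winf k) ^ 2 := by
          rw [Finset.sum_const, Finset.card_univ, Fintype.card_fin, nsmul_eq_mul]
          field_simp
  · -- g bound
    have hterm : ∀ i (j : Fin d),
        |(e i * a k * deriv σ (ε * ∑ t, w k t * x i t) + y i * a k) * x i j|
        ≤ Real.sqrt d * m * ν * ε * pmax ^ 2 * |a k| + ε * Real.sqrt d * winf k * |a k| := by
      intro i j
      have hσ'k : |deriv σ (ε * ∑ t, w k t * x i t) - 1| ≤ ε * (Real.sqrt d * winf k) := by
        calc |deriv σ (ε * ∑ t, w k t * x i t) - 1| ≤ |ε * ∑ t, w k t * x i t| := hnear _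
          _ = ε * |∑ t, w k t * x i t| := by rw [abs_mul, abs_of_pos hε]
          _ ≤ ε * (Real.sqrt d * winf k) := mul_le_mul_of_nonneg_left (hS k i) hε.le
      have hrw : e i * a k * deriv σ (ε * ∑ t, w k t * x i t) + y i * a k
          = a k * ((∑ l, ν * a l * σ (ε * ∑ t, w l t * x i t))
              * deriv σ (ε * ∑ t, w k t * x i t)
              - y i * (deriv σ (ε * ∑ t, w k t * x i t) - 1)) := by
        rw [he i]; ring
      rw [hrw, abs_mul, abs_mul]
      calc |a k| * |(∑ l, ν * a l * σ (ε * ∑ t, w l t * x i t))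
              * deriv σ (ε * ∑ t, w k t * x i t)
              - y i * (deriv σ (ε * ∑ t, w k t * x i t) - 1)| * |x i j|
          ≤ |a k| * (|(∑ l, ν * a l * σ (ε * ∑ t, w l t * x i t))
                * deriv σ (ε * ∑ t, w k t * x i t)|
              + |y i * (deriv σ (ε * ∑ t, w k t * x i t) - 1)|) * 1 := by
            gcongr <;> first
              | exact abs_sub _ _ | exact hxabs i j | positivity
        _ ≤ |a k| * ((m * (ν * (ε * (Real.sqrt d * pmax)) * pmax)) * 1
              + 1 * (ε * (Real.sqrt d * winf k))) * 1 := by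
            gcongr <;> first
              | (rw [abs_mul]
                 exact mul_le_mul (hE i) (hσ' _) (abs_nonneg _) (by positivity))
              | (rw [abs_mul]
                 exact mul_le_mul (hy i) hσ'k (abs_nonneg _) (by norm_num))
              | positivity
        _ = Real.sqrt d * m * ν * ε * pmax ^ 2 * |a k|
              + ε * Real.sqrt d * winf k * |a k| := by ring
    apply ciSup_le
    intro j
    rw [hg k j]
    calc |(1 / (n : ℝ)) * ∑ i,
            (e i * a k * deriv σ (ε * ∑ t, w k t * x i t) + y i * a k) * x i j|
        = (1 / (n : ℝ)) * |∑ i,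
            (e i * a k * deriv σ (ε * ∑ t, w k t * x i t) + y i * a k) * x i j| := by
          rw [abs_mul, abs_of_nonneg (by positivity)]
      _ ≤ (1 / (n : ℝ)) * ∑ i,
            |(e i * a k * deriv σ (ε * ∑ t, w k t * x i t) + y i * a k) * x i j| := by
          apply mul_le_mul_of_nonneg_left (Finset.abs_sum_le_sum_abs _ _) (by positivity)
      _ ≤ (1 / (n : ℝ)) * ∑ _i : Fin n,
            (Real.sqrt d * m * ν * ε * pmax ^ 2 * |a k|
              + ε * Real.sqrt d * winf k * |a k|) := by
          apply mul_le_mul_of_nonneg_left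
            (Finset.sum_le_sum (fun i _ => hterm i j)) (by positivity)
      _ = Real.sqrt d * m * ν * ε * pmax ^ 2 * |a k|
            + ε * Real.sqrt d * winf k * |a k| := by
          rw [Finset.sum_const, Finset.card_univ, Fintype.card_fin, nsmul_eq_mul]
          field_simp
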